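/- Suppose NF_f(G₀,G₁,G₂,G₃) holds (stable amalgamation of locally finite groups G₁, G₂ over a finite group G₀ inside G₃), and let a ∈ G₁ \ G₀, b ∈ G₂ \ G₀. Then a and b commute in G₃ if and only if: a commutes with every element of G₀, b commutes with every element of G₀, and G₀ is abelian. -/
import Mathlib


universe u

/-- A group is locally finite if every finitely generated subgroup is finite. -/
def IsLocallyFiniteGroup (G : Type*) [Group G] : Prop :=
  ∀ s : Finset G, (Subgroup.closure (s : Set G) : Set G).Finite

/-- An amalgamation try over `G₀ ⊆ H₁`, `G₀ ⊆ H₂` (given by the embeddings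
`κ₁`, `κ₂`): a choice of left coset representative sets `I₁ ⊆ H₁`, `I₂ ⊆ H₂`
of `G₀`, both containing the identity. -/
structure AmalgTry (G₀ H₁ H₂ : Type u) [Group G₀] [Group H₁] [Group H₂]
    (κ₁ : G₀ →* H₁) (κ₂ : G₀ →* H₂) where
  I₁ : Set H₁
  I₂ : Set H₂
  one₁ : (1 : H₁) ∈ I₁
  one₂ : (1 : H₂) ∈ I₂
  rep₁ : ∀ g : H₁, ∃! r, r ∈ I₁ ∧ ∃ h : G₀, g = r * κ₁ h
  rep₂ : ∀ g : H₂, ∃! r, r ∈ I₂ ∧ ∃ h : G₀, g = r * κ₂ h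

namespace AmalgTry

variable {G₀ H₁ H₂ : Type u} [Group G₀] [Group H₁] [Group H₂]
  {κ₁ : G₀ →* H₁} {κ₂ : G₀ →* H₂}

/-- The set of triples `(g₀, g₁, g₂)` with `g₀ ∈ G₀`, `g₁ ∈ I₁`, `g₂ ∈ I₂`. -/
abbrev U (x : AmalgTry G₀ H₁ H₂ κ₁ κ₂) : Type u :=
  {p : G₀ × H₁ × H₂ // p.2.1 ∈ x.I₁ ∧ p.2.2 ∈ x.I₂}

/-- The canonical action of `g ∈ H₁` on the triples: `(g₀,g₁,g₂) ↦ (g₀',g₁',g₂)`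
where `g₁' * g₀' = g₁ * g₀ * g` is the unique coset decomposition. -/
noncomputable def j₁ (x : AmalgTry G₀ H₁ H₂ κ₁ κ₂) (g : H₁) (u : x.U) : x.U :=
  ⟨⟨((x.rep₁ (u.val.2.1 * κ₁ u.val.1 * g)).exists.choose_spec.2).choose,
    (x.rep₁ (u.val.2.1 * κ₁ u.val.1 * g)).exists.choose,
    u.val.2.2⟩,
   ⟨(x.rep₁ (u.val.2.1 * κ₁ u.val.1 * g)).exists.choose_spec.1, u.prop.2⟩⟩

/-- The canonical action of `g ∈ H₂` on the triples: `(g₀,g₁,g₂) ↦ (g₀'',g₁,g₂'')`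
where `g₂'' * g₀'' = g₂ * g₀ * g` is the unique coset decomposition. -/
noncomputable def j₂ (x : AmalgTry G₀ H₁ H₂ κ₁ κ₂) (g : H₂) (u : x.U) : x.U :=
  ⟨⟨((x.rep₂ (u.val.2.2 * κ₂ u.val.1 * g)).exists.choose_spec.2).choose,
    u.val.2.1,
    (x.rep₂ (u.val.2.2 * κ₂ u.val.1 * g)).exists.choose⟩,
   ⟨u.prop.1, (x.rep₂ (u.val.2.2 * κ₂ u.val.1 * g)).exists.choose_spec.1⟩⟩

end AmalgTry

/-- `F : G₃ → (U → U)` is a compatible homomorphism for the try `x`: it is an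
(anti)homomorphism to the permutations of the triples (composition read from
the left as in the paper) restricting to `j₁` on `G₁` and to `j₂` on `G₂`. -/
def CompatAt {G₀ G₁ G₂ G₃ H₁ H₂ : Type u}
    [Group G₀] [Group G₁] [Group G₂] [Group G₃] [Group H₁] [Group H₂]
    (ι₁ : G₀ →* G₁) (ι₂ : G₀ →* G₂) (e₁ : G₁ →* G₃) (e₂ : G₂ →* G₃)
    (f₁ : G₁ →* H₁) (f₂ : G₂ →* H₂)
    (x : AmalgTry G₀ H₁ H₂ (f₁.comp ι₁) (f₂.comp ι₂))
    (F : G₃ → (x.U → x.U)) : Prop :=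
  F 1 = id ∧ (∀ a b : G₃, F (a * b) = F b ∘ F a) ∧
  (∀ g : G₁, F (e₁ g) = x.j₁ (f₁ g)) ∧ (∀ g : G₂, F (e₂ g) = x.j₂ (f₂ g))

/-- A witness that some amalgamation try separates `a ∈ G₃` from the identity. -/
structure SepWitness {G₀ G₁ G₂ G₃ : Type u}
    [Group G₀] [Group G₁] [Group G₂] [Group G₃]
    (ι₁ : G₀ →* G₁) (ι₂ : G₀ →* G₂) (e₁ : G₁ →* G₃) (e₂ : G₂ →* G₃)
    (a : G₃) : Type (u + 1) where
  H₁ : Type u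
  H₂ : Type u
  [grp₁ : Group H₁]
  [grp₂ : Group H₂]
  f₁ : G₁ →* H₁
  f₂ : G₂ →* H₂
  inj₁ : Function.Injective f₁
  inj₂ : Function.Injective f₂
  lf₁ : IsLocallyFiniteGroup H₁
  lf₂ : IsLocallyFiniteGroup H₂
  x : AmalgTry G₀ H₁ H₂ (f₁.comp ι₁) (f₂.comp ι₂)
  F : G₃ → (x.U → x.U)
  compat : CompatAt ι₁ ι₂ e₁ e₂ f₁ f₂ x F
  sep : F a ≠ id

/-- `NF_fin(G₀,G₁,G₂,G₃)`: the canonical stable amalgam of `G₁`, `G₂` over `G₀`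
inside `G₃` (the subgroup inclusions are given by the injective homomorphisms
`ι₁`, `ι₂`, `e₁`, `e₂` with `e₁ ∘ ι₁ = e₂ ∘ ι₂`, and `G₃ = ⟨G₁ ∪ G₂⟩`):
for every amalgamation try (over locally finite extensions of the factors)
there is a compatible homomorphism from `G₃`, and these jointly separate
the points of `G₃`. -/
def NFfin (G₀ G₁ G₂ G₃ : Type u) [Group G₀] [Group G₁] [Group G₂] [Group G₃]
    (ι₁ : G₀ →* G₁) (ι₂ : G₀ →* G₂) (e₁ : G₁ →* G₃) (e₂ : G₂ →* G₃) : Prop :=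
  Function.Injective ι₁ ∧ Function.Injective ι₂ ∧
  Function.Injective e₁ ∧ Function.Injective e₂ ∧
  (∀ g : G₀, e₁ (ι₁ g) = e₂ (ι₂ g)) ∧
  Subgroup.closure (Set.range e₁ ∪ Set.range e₂) = (⊤ : Subgroup G₃) ∧
  (∀ (H₁ H₂ : Type u) [Group H₁] [Group H₂] (f₁ : G₁ →* H₁) (f₂ : G₂ →* H₂),
    Function.Injective f₁ → Function.Injective f₂ →
    IsLocallyFiniteGroup H₁ → IsLocallyFiniteGroup H₂ →
    ∀ x : AmalgTry G₀ H₁ H₂ (f₁.comp ι₁) (f₂.comp ι₂),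
      ∃ F : G₃ → (x.U → x.U), CompatAt ι₁ ι₂ e₁ e₂ f₁ f₂ x F) ∧
  (∀ a : G₃, a ≠ 1 → Nonempty (SepWitness ι₁ ι₂ e₁ e₂ a))

/-- `NF_f(G₀,G₁,G₂,G₃)`: stable amalgamation of the (locally finite) groups
`G₁`, `G₂` over the finite base `G₀` inside `G₃`: for all finite subgroups
`K₁ ⊆ G₁`, `K₂ ⊆ G₂` containing (the image of) `G₀`, letting
`G₃' = ⟨K₁ ∪ K₂⟩ ⊆ G₃`, the canonical finite stable amalgam
`NF_fin(G₀,K₁,K₂,G₃')` holds. -/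
def NFf (G₀ G₁ G₂ G₃ : Type u) [Group G₀] [Group G₁] [Group G₂] [Group G₃]
    (ι₁ : G₀ →* G₁) (ι₂ : G₀ →* G₂) (e₁ : G₁ →* G₃) (e₂ : G₂ →* G₃) : Prop :=
  Function.Injective ι₁ ∧ Function.Injective ι₂ ∧
  Function.Injective e₁ ∧ Function.Injective e₂ ∧
  (∀ g : G₀, e₁ (ι₁ g) = e₂ (ι₂ g)) ∧
  ∀ (K₁ : Subgroup G₁) (K₂ : Subgroup G₂),
    (K₁ : Set G₁).Finite → (K₂ : Set G₂).Finite →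
    ∀ (h₁ : ∀ g : G₀, ι₁ g ∈ K₁) (h₂ : ∀ g : G₀, ι₂ g ∈ K₂),
      NFfin G₀ ↥K₁ ↥K₂
        ↥(Subgroup.closure (e₁ '' (K₁ : Set G₁) ∪ e₂ '' (K₂ : Set G₂)))
        (ι₁.codRestrict K₁ h₁) (ι₂.codRestrict K₂ h₂)
        (MonoidHom.codRestrict (e₁.comp K₁.subtype) _
          (fun k => Subgroup.subset_closure (Set.mem_union_left _ ⟨k.1, k.2, rfl⟩)))
        (MonoidHom.codRestrict (e₂.comp K₂.subtype) _
          (fun k => Subgroup.subset_closure (Set.mem_union_right _ ⟨k.1, k.2, rfl⟩)))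


section SecCons
open scoped Classical

variable {G₀ H : Type u} [Group G₀] [Group H]

/-- A coset-representative selector pinning the value at `c`. -/
noncomputable def sec (κ : G₀ →* H) (c : H) : H → H := fun g =>
  if ((g : H ⧸ κ.range) : H ⧸ κ.range) = ((c : H) : H ⧸ κ.range) then c
  else if (g : H ⧸ κ.range) = ((1 : H) : H ⧸ κ.range) then 1
  else ((g : H ⧸ κ.range)).out

lemma sec_mk (κ : G₀ →* H) (c : H) (g : H) :
    ((sec κ c g : H) : H ⧸ κ.range) = (g : H ⧸ κ.range) := by
  unfold sec
  split_ifs with h1 h2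
  · exact h1.symm
  · exact h2.symm
  · exact QuotientGroup.out_eq' _

lemma sec_pin (κ : G₀ →* H) (c : H) : sec κ c c = c := by
  unfold sec; rw [if_pos rfl]

lemma sec_one (κ : G₀ →* H) {c : H} (hc : c ∉ κ.range) : sec κ c 1 = 1 := by
  unfold sec
  rw [if_neg, if_pos rfl]
  intro h1
  exact hc (by simpa using QuotientGroup.eq.mp h1)

lemma sec_congr (κ : G₀ →* H) (c : H) {g g' : H}
    (h : (g : H ⧸ κ.range) = (g' : H ⧸ κ.range)) : sec κ c g = sec κ c g' := by
  unfold sec; rw [h]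

lemma sec_rep (κ : G₀ →* H) {c : H} (hc : c ∉ κ.range) (g : H) :
    ∃! r, r ∈ Set.range (sec κ c) ∧ ∃ h : G₀, g = r * κ h := by
  refine ⟨sec κ c g, ⟨⟨g, rfl⟩, ?_⟩, ?_⟩
  · obtain ⟨h, hh⟩ := QuotientGroup.eq.mp (sec_mk κ c g)
    exact ⟨h, by rw [hh, mul_inv_cancel_left]⟩
  · rintro y ⟨⟨x, rfl⟩, h, hg⟩
    have h1 : ((sec κ c x : H) : H ⧸ κ.range) = (g : H ⧸ κ.range) :=
      QuotientGroup.eq.mpr ⟨h, by rw [hg, inv_mul_cancel_left]⟩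
    calc sec κ c x = sec κ c (sec κ c x) := (sec_congr κ c (sec_mk κ c x)).symm
      _ = sec κ c g := sec_congr κ c h1

end SecCons

section TryLemmas

variable {G₀ H₁ H₂ : Type u} [Group G₀] [Group H₁] [Group H₂]
  {κ₁ : G₀ →* H₁} {κ₂ : G₀ →* H₂}

/-- The try with representative selectors pinned at `c₁`, `c₂`. -/
noncomputable def mkTry (κ₁ : G₀ →* H₁) (κ₂ : G₀ →* H₂) (c₁ : H₁) (hc₁ : c₁ ∉ κ₁.range)
    (c₂ : H₂) (hc₂ : c₂ ∉ κ₂.range) : AmalgTry G₀ H₁ H₂ κ₁ κ₂ where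
  I₁ := Set.range (sec κ₁ c₁)
  I₂ := Set.range (sec κ₂ c₂)
  one₁ := ⟨1, sec_one κ₁ hc₁⟩
  one₂ := ⟨1, sec_one κ₂ hc₂⟩
  rep₁ := sec_rep κ₁ hc₁
  rep₂ := sec_rep κ₂ hc₂

lemma mkTry_pin₁ (c₁ : H₁) (hc₁ : c₁ ∉ κ₁.range) (c₂ : H₂) (hc₂ : c₂ ∉ κ₂.range) :
    c₁ ∈ (mkTry κ₁ κ₂ c₁ hc₁ c₂ hc₂).I₁ := ⟨c₁, sec_pin κ₁ c₁⟩

lemma mkTry_pin₂ (c₁ : H₁) (hc₁ : c₁ ∉ κ₁.range) (c₂ : H₂) (hc₂ : c₂ ∉ κ₂.range) :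
    c₂ ∈ (mkTry κ₁ κ₂ c₁ hc₁ c₂ hc₂).I₂ := ⟨c₂, sec_pin κ₂ c₂⟩

namespace AmalgTry

variable (x : AmalgTry G₀ H₁ H₂ κ₁ κ₂)

lemma j₁_spec (g : H₁) (u : x.U) :
    u.val.2.1 * κ₁ u.val.1 * g = (x.j₁ g u).val.2.1 * κ₁ (x.j₁ g u).val.1 :=
  ((x.rep₁ (u.val.2.1 * κ₁ u.val.1 * g)).exists.choose_spec.2).choose_spec

lemma j₂_spec (g : H₂) (u : x.U) :
    u.val.2.2 * κ₂ u.val.1 * g = (x.j₂ g u).val.2.2 * κ₂ (x.j₂ g u).val.1 :=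
  ((x.rep₂ (u.val.2.2 * κ₂ u.val.1 * g)).exists.choose_spec.2).choose_spec

lemma j₁_mem (g : H₁) (u : x.U) : (x.j₁ g u).val.2.1 ∈ x.I₁ :=
  (x.rep₁ (u.val.2.1 * κ₁ u.val.1 * g)).exists.choose_spec.1

lemma j₂_mem (g : H₂) (u : x.U) : (x.j₂ g u).val.2.2 ∈ x.I₂ :=
  (x.rep₂ (u.val.2.2 * κ₂ u.val.1 * g)).exists.choose_spec.1

lemma j₁_snd (g : H₁) (u : x.U) : (x.j₁ g u).val.2.2 = u.val.2.2 := rfl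

lemma j₂_fst (g : H₂) (u : x.U) : (x.j₂ g u).val.2.1 = u.val.2.1 := rfl

lemma j₁_eq (hκ : Function.Injective κ₁) (g : H₁) (u : x.U)
    (h' : G₀) (r : H₁) (hr : r ∈ x.I₁)
    (heq : u.val.2.1 * κ₁ u.val.1 * g = r * κ₁ h') :
    x.j₁ g u = ⟨(h', r, u.val.2.2), hr, u.prop.2⟩ := by
  have hs := x.j₁_spec g u
  have hru : (x.j₁ g u).val.2.1 = r :=
    (x.rep₁ (u.val.2.1 * κ₁ u.val.1 * g)).unique
      ⟨x.j₁_mem g u, (x.j₁ g u).val.1, hs⟩ ⟨hr, h', heq⟩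
  have hh : (x.j₁ g u).val.1 = h' := by
    apply hκ
    have h2 := hs.symm.trans heq
    rw [hru] at h2
    exact mul_left_cancel h2
  apply Subtype.ext
  exact Prod.ext hh (Prod.ext hru rfl)

lemma j₂_eq (hκ : Function.Injective κ₂) (g : H₂) (u : x.U)
    (h' : G₀) (s : H₂) (hs' : s ∈ x.I₂)
    (heq : u.val.2.2 * κ₂ u.val.1 * g = s * κ₂ h') :
    x.j₂ g u = ⟨(h', u.val.2.1, s), u.prop.1, hs'⟩ := by
  have hs := x.j₂_spec g u
  have hsu : (x.j₂ g u).val.2.2 = s :=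
    (x.rep₂ (u.val.2.2 * κ₂ u.val.1 * g)).unique
      ⟨x.j₂_mem g u, (x.j₂ g u).val.1, hs⟩ ⟨hs', h', heq⟩
  have hh : (x.j₂ g u).val.1 = h' := by
    apply hκ
    have h2 := hs.symm.trans heq
    rw [hsu] at h2
    exact mul_left_cancel h2
  apply Subtype.ext
  exact Prod.ext hh (Prod.ext rfl hsu)

end AmalgTry

end TryLemmas

/-- Suppose `NF_f(G₀,G₁,G₂,G₃)` holds for locally finite groups `G₁`, `G₂`
over the finite base `G₀`, and `a ∈ G₁ \ G₀`, `b ∈ G₂ \ G₀`.  Then `a` and `b`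
commute in `G₃` iff `a` commutes with every element of `G₀`, `b` commutes with
every element of `G₀`, and `G₀` is abelian. -/
theorem stmt17 {G₀ G₁ G₂ G₃ : Type u}
    [Group G₀] [Group G₁] [Group G₂] [Group G₃] [Finite G₀]
    (hlf₁ : IsLocallyFiniteGroup G₁) (hlf₂ : IsLocallyFiniteGroup G₂)
    (hlf₃ : IsLocallyFiniteGroup G₃)
    (ι₁ : G₀ →* G₁) (ι₂ : G₀ →* G₂) (e₁ : G₁ →* G₃) (e₂ : G₂ →* G₃)
    (h : NFf G₀ G₁ G₂ G₃ ι₁ ι₂ e₁ e₂)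
    (a : G₁) (b : G₂)
    (ha : a ∉ Set.range ι₁) (hb : b ∉ Set.range ι₂) :
    Commute (e₁ a) (e₂ b) ↔
      ((∀ g : G₀, Commute a (ι₁ g)) ∧ (∀ g : G₀, Commute b (ι₂ g)) ∧
        (∀ g g' : G₀, Commute g g')) := by
  classical
  obtain ⟨hι₁, hι₂, he₁, he₂, hee, hNF⟩ := h
  -- the finite subgroups generated by G₀ together with a (resp. b)
  have hfs₁ : (Set.range ι₁ ∪ {a}).Finite :=
    (Set.finite_range ι₁).union (Set.finite_singleton a)
  have hfs₂ : (Set.range ι₂ ∪ {b}).Finite :=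
    (Set.finite_range ι₂).union (Set.finite_singleton b)
  set K₁ : Subgroup G₁ := Subgroup.closure (Set.range ι₁ ∪ {a}) with hK₁def
  set K₂ : Subgroup G₂ := Subgroup.closure (Set.range ι₂ ∪ {b}) with hK₂def
  have hK₁fin : (K₁ : Set G₁).Finite := by
    have := hlf₁ hfs₁.toFinset
    rw [Set.Finite.coe_toFinset] at this
    exact this
  have hK₂fin : (K₂ : Set G₂).Finite := by
    have := hlf₂ hfs₂.toFinset
    rw [Set.Finite.coe_toFinset] at this
    exact this
  have hmem₁ : ∀ g : G₀, ι₁ g ∈ K₁ := fun g =>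
    Subgroup.subset_closure (Set.mem_union_left _ ⟨g, rfl⟩)
  have hmem₂ : ∀ g : G₀, ι₂ g ∈ K₂ := fun g =>
    Subgroup.subset_closure (Set.mem_union_left _ ⟨g, rfl⟩)
  have haK : a ∈ K₁ := Subgroup.subset_closure (Set.mem_union_right _ rfl)
  have hbK : b ∈ K₂ := Subgroup.subset_closure (Set.mem_union_right _ rfl)
  obtain ⟨hι₁', hι₂', he₁', he₂', hcomm', hgen, hex, hsep⟩ :=
    hNF K₁ K₂ hK₁fin hK₂fin hmem₁ hmem₂
  set ι₁' := ι₁.codRestrict K₁ hmem₁ with hι₁'def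
  set ι₂' := ι₂.codRestrict K₂ hmem₂ with hι₂'def
  set e₁' := MonoidHom.codRestrict (e₁.comp K₁.subtype)
    (Subgroup.closure (e₁ '' (K₁ : Set G₁) ∪ e₂ '' (K₂ : Set G₂)))
    (fun k => Subgroup.subset_closure (Set.mem_union_left _ ⟨k.1, k.2, rfl⟩)) with he₁'def
  set e₂' := MonoidHom.codRestrict (e₂.comp K₂.subtype)
    (Subgroup.closure (e₁ '' (K₁ : Set G₁) ∪ e₂ '' (K₂ : Set G₂)))
    (fun k => Subgroup.subset_closure (Set.mem_union_right _ ⟨k.1, k.2, rfl⟩)) with he₂'def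
  haveI : Finite ↥K₁ := hK₁fin.to_subtype
  haveI : Finite ↥K₂ := hK₂fin.to_subtype
  have hlfK₁ : IsLocallyFiniteGroup ↥K₁ := fun _ => Set.toFinite _
  have hlfK₂ : IsLocallyFiniteGroup ↥K₂ := fun _ => Set.toFinite _
  set a' : ↥K₁ := ⟨a, haK⟩ with ha'def
  set b' : ↥K₂ := ⟨b, hbK⟩ with hb'def
  constructor
  · -- forward direction
    intro hab
    have hab' : e₁' a' * e₂' b' = e₂' b' * e₁' a' := Subtype.ext hab
    have hκinj₁ : Function.Injective ⇑((MonoidHom.id ↥K₁).comp ι₁') :=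
      fun p q hpq => hι₁' hpq
    have hκinj₂ : Function.Injective ⇑((MonoidHom.id ↥K₂).comp ι₂') :=
      fun p q hpq => hι₂' hpq
    -- the two actions must commute in every pinned try
    have key : ∀ (c₁ : ↥K₁) (hc₁ : c₁ ∉ ((MonoidHom.id ↥K₁).comp ι₁').range)
        (c₂ : ↥K₂) (hc₂ : c₂ ∉ ((MonoidHom.id ↥K₂).comp ι₂').range)
        (u : (mkTry _ _ c₁ hc₁ c₂ hc₂).U),
        (mkTry _ _ c₁ hc₁ c₂ hc₂).j₂ b' ((mkTry _ _ c₁ hc₁ c₂ hc₂).j₁ a' u) =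
          (mkTry _ _ c₁ hc₁ c₂ hc₂).j₁ a' ((mkTry _ _ c₁ hc₁ c₂ hc₂).j₂ b' u) := by
      intro c₁ hc₁ c₂ hc₂ u
      obtain ⟨F, hF1, hFm, hFj₁, hFj₂⟩ := hex ↥K₁ ↥K₂ (MonoidHom.id ↥K₁) (MonoidHom.id ↥K₂)
        (fun _ _ hh => hh) (fun _ _ hh => hh) hlfK₁ hlfK₂ (mkTry _ _ c₁ hc₁ c₂ hc₂)
      have h1 := congrArg F hab'
      rw [hFm, hFm, hFj₁ a', hFj₂ b'] at h1
      exact congrFun h1 u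
    -- non-membership of the pins
    have hnra0 : a' ∉ ((MonoidHom.id ↥K₁).comp ι₁').range := by
      rintro ⟨g, hg⟩
      exact ha ⟨g, congrArg Subtype.val hg⟩
    have hnrb0 : b' ∉ ((MonoidHom.id ↥K₂).comp ι₂').range := by
      rintro ⟨g, hg⟩
      exact hb ⟨g, congrArg Subtype.val hg⟩
    have hnra : ∀ g₀ : G₀, ι₁' g₀ * a' ∉ ((MonoidHom.id ↥K₁).comp ι₁').range := by
      rintro g₀ ⟨g, hg⟩
      apply ha
      refine ⟨g₀⁻¹ * g, ?_⟩
      have hg' : ι₁' g = ι₁' g₀ * a' := hg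
      have h2 : ι₁' (g₀⁻¹ * g) = a' := by
        rw [map_mul, map_inv, hg', inv_mul_cancel_left]
      exact congrArg Subtype.val h2
    have hnrb : ∀ g₀ : G₀, ι₂' g₀ * b' ∉ ((MonoidHom.id ↥K₂).comp ι₂').range := by
      rintro g₀ ⟨g, hg⟩
      apply hb
      refine ⟨g₀⁻¹ * g, ?_⟩
      have hg' : ι₂' g = ι₂' g₀ * b' := hg
      have h2 : ι₂' (g₀⁻¹ * g) = b' := by
        rw [map_mul, map_inv, hg', inv_mul_cancel_left]
      exact congrArg Subtype.val h2
    have hnra' : ∀ g₀ : G₀, a' * (ι₁' g₀)⁻¹ ∉ ((MonoidHom.id ↥K₁).comp ι₁').range := by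
      rintro g₀ ⟨g, hg⟩
      apply ha
      refine ⟨g * g₀, ?_⟩
      have hg' : ι₁' g = a' * (ι₁' g₀)⁻¹ := hg
      have h2 : ι₁' (g * g₀) = a' := by
        rw [map_mul, hg', inv_mul_cancel_right]
      exact congrArg Subtype.val h2
    have hnrb' : ∀ g₀ : G₀, b' * (ι₂' g₀)⁻¹ ∉ ((MonoidHom.id ↥K₂).comp ι₂').range := by
      rintro g₀ ⟨g, hg⟩
      apply hb
      refine ⟨g * g₀, ?_⟩
      have hg' : ι₂' g = b' * (ι₂' g₀)⁻¹ := hg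
      have h2 : ι₂' (g * g₀) = b' := by
        rw [map_mul, hg', inv_mul_cancel_right]
      exact congrArg Subtype.val h2
    -- Goal A : a commutes with every element of G₀
    have hcaG : ∀ g₀ : G₀, Commute a (ι₁ g₀) := by
      intro g₀
      set x := mkTry ((MonoidHom.id ↥K₁).comp ι₁') ((MonoidHom.id ↥K₂).comp ι₂')
        a' hnra0 (ι₂' g₀ * b') (hnrb g₀) with hxdef
      set u₀ : x.U := ⟨(g₀, 1, 1), x.one₁, x.one₂⟩ with hu₀def
      have hj := key a' hnra0 (ι₂' g₀ * b') (hnrb g₀) u₀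
      have r1 : x.j₂ b' u₀ = ⟨(1, 1, ι₂' g₀ * b'), x.one₁, mkTry_pin₂ _ _ _ _⟩ :=
        x.j₂_eq hκinj₂ b' u₀ 1 (ι₂' g₀ * b') (mkTry_pin₂ _ _ _ _) (by
          show (1 : ↥K₂) * ι₂' g₀ * b' = ι₂' g₀ * b' * ι₂' (1 : G₀)
          rw [map_one, mul_one, one_mul])
      have r2 : x.j₁ a' ⟨(1, 1, ι₂' g₀ * b'), x.one₁, mkTry_pin₂ _ _ _ _⟩ =
          ⟨(1, a', ι₂' g₀ * b'), mkTry_pin₁ _ _ _ _, mkTry_pin₂ _ _ _ _⟩ :=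
        x.j₁_eq hκinj₁ a' _ 1 a' (mkTry_pin₁ _ _ _ _) (by
          show (1 : ↥K₁) * ι₁' (1 : G₀) * a' = a' * ι₁' (1 : G₀)
          simp)
      rw [r1, r2] at hj
      -- hj : x.j₂ b' (x.j₁ a' u₀) = ⟨(1, a', ι₂' g₀ * b'), _, _⟩
      set u₁ := x.j₁ a' u₀ with hu₁def
      have h21 : u₁.val.2.1 = a' :=
        (x.j₂_fst b' u₁).symm.trans (congrArg (fun v : x.U => v.val.2.1) hj)
      have hfstj : (x.j₂ b' u₁).val.1 = 1 := congrArg (fun v : x.U => v.val.1) hj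
      have hsndj : (x.j₂ b' u₁).val.2.2 = ι₂' g₀ * b' :=
        congrArg (fun v : x.U => v.val.2.2) hj
      have hspec₂ := x.j₂_spec b' u₁
      rw [hfstj, hsndj] at hspec₂
      -- hspec₂ : u₁.2.2 * κ₂ u₁.1 * b' = (ι₂' g₀ * b') * κ₂ 1
      have h22 : u₁.val.2.2 = 1 := x.j₁_snd a' u₀
      rw [h22, map_one, mul_one, one_mul] at hspec₂
      -- hspec₂ : κ₂ u₁.1 * b' = ι₂' g₀ * b'
      have hu₁1 : u₁.val.1 = g₀ := hι₂' (mul_right_cancel hspec₂)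
      have hspec₁ := x.j₁_spec a' u₀
      rw [h21, hu₁1] at hspec₁
      -- hspec₁ : u₀.2.1 * κ₁ g₀ * a' = a' * κ₁ g₀
      have hfin : ι₁' g₀ * a' = a' * ι₁' g₀ := by
        have : (1 : ↥K₁) * ι₁' g₀ * a' = a' * ι₁' g₀ := hspec₁
        rwa [one_mul] at this
      exact (congrArg Subtype.val hfin).symm
    -- Goal B : b commutes with every element of G₀
    have hcbG : ∀ g₀ : G₀, Commute b (ι₂ g₀) := by
      intro g₀
      set x := mkTry ((MonoidHom.id ↥K₁).comp ι₁') ((MonoidHom.id ↥K₂).comp ι₂')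
        (ι₁' g₀ * a') (hnra g₀) b' hnrb0 with hxdef
      set u₀ : x.U := ⟨(g₀, 1, 1), x.one₁, x.one₂⟩ with hu₀def
      have hj := key (ι₁' g₀ * a') (hnra g₀) b' hnrb0 u₀
      have r1 : x.j₁ a' u₀ = ⟨(1, ι₁' g₀ * a', 1), mkTry_pin₁ _ _ _ _, x.one₂⟩ :=
        x.j₁_eq hκinj₁ a' u₀ 1 (ι₁' g₀ * a') (mkTry_pin₁ _ _ _ _) (by
          show (1 : ↥K₁) * ι₁' g₀ * a' = ι₁' g₀ * a' * ι₁' (1 : G₀)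
          rw [map_one, mul_one, one_mul])
      have r2 : x.j₂ b' ⟨(1, ι₁' g₀ * a', 1), mkTry_pin₁ _ _ _ _, x.one₂⟩ =
          ⟨(1, ι₁' g₀ * a', b'), mkTry_pin₁ _ _ _ _, mkTry_pin₂ _ _ _ _⟩ :=
        x.j₂_eq hκinj₂ b' _ 1 b' (mkTry_pin₂ _ _ _ _) (by
          show (1 : ↥K₂) * ι₂' (1 : G₀) * b' = b' * ι₂' (1 : G₀)
          simp)
      rw [r1, r2] at hj
      -- hj : ⟨(1, ι₁' g₀ * a', b'), _, _⟩ = x.j₁ a' (x.j₂ b' u₀)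
      set u₂ := x.j₂ b' u₀ with hu₂def
      have hj' := hj.symm
      have h22 : u₂.val.2.2 = b' :=
        (x.j₁_snd a' u₂).symm.trans (congrArg (fun v : x.U => v.val.2.2) hj')
      have hfstj : (x.j₁ a' u₂).val.1 = 1 := congrArg (fun v : x.U => v.val.1) hj'
      have hsndj : (x.j₁ a' u₂).val.2.1 = ι₁' g₀ * a' :=
        congrArg (fun v : x.U => v.val.2.1) hj'
      have hspec₁ := x.j₁_spec a' u₂
      rw [hfstj, hsndj] at hspec₁
      have h21 : u₂.val.2.1 = 1 := x.j₂_fst b' u₀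
      rw [h21, map_one, mul_one, one_mul] at hspec₁
      -- hspec₁ : κ₁ u₂.1 * a' = ι₁' g₀ * a'
      have hu₂1 : u₂.val.1 = g₀ := hι₁' (mul_right_cancel hspec₁)
      have hspec₂ := x.j₂_spec b' u₀
      rw [h22, hu₂1] at hspec₂
      have hfin : ι₂' g₀ * b' = b' * ι₂' g₀ := by
        have : (1 : ↥K₂) * ι₂' g₀ * b' = b' * ι₂' g₀ := hspec₂
        rwa [one_mul] at this
      exact (congrArg Subtype.val hfin).symm
    -- Goal C : G₀ is abelian
    refine ⟨hcaG, hcbG, fun g₀ g₀' => ?_⟩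
    have hcaK : ∀ g : G₀, ι₁' g * a' = a' * ι₁' g := fun g =>
      Subtype.ext ((hcaG g).eq).symm
    have hcbK : ∀ g : G₀, ι₂' g * b' = b' * ι₂' g := fun g =>
      Subtype.ext ((hcbG g).eq).symm
    set x := mkTry ((MonoidHom.id ↥K₁).comp ι₁') ((MonoidHom.id ↥K₂).comp ι₂')
      (a' * (ι₁' g₀)⁻¹) (hnra' g₀) (b' * (ι₂' g₀')⁻¹) (hnrb' g₀') with hxdef
    set u₀ : x.U := ⟨(1, 1, 1), x.one₁, x.one₂⟩ with hu₀def
    have hj := key (a' * (ι₁' g₀)⁻¹) (hnra' g₀) (b' * (ι₂' g₀')⁻¹) (hnrb' g₀') u₀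
    have l1 : x.j₁ a' u₀ = ⟨(g₀, a' * (ι₁' g₀)⁻¹, 1), mkTry_pin₁ _ _ _ _, x.one₂⟩ :=
      x.j₁_eq hκinj₁ a' u₀ g₀ (a' * (ι₁' g₀)⁻¹) (mkTry_pin₁ _ _ _ _) (by
        show (1 : ↥K₁) * ι₁' (1 : G₀) * a' = a' * (ι₁' g₀)⁻¹ * ι₁' g₀
        rw [map_one, mul_one, one_mul, inv_mul_cancel_right])
    have l2 : x.j₂ b' ⟨(g₀, a' * (ι₁' g₀)⁻¹, 1), mkTry_pin₁ _ _ _ _, x.one₂⟩ =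
        ⟨(g₀' * g₀, a' * (ι₁' g₀)⁻¹, b' * (ι₂' g₀')⁻¹),
          mkTry_pin₁ _ _ _ _, mkTry_pin₂ _ _ _ _⟩ :=
      x.j₂_eq hκinj₂ b' _ (g₀' * g₀) (b' * (ι₂' g₀')⁻¹) (mkTry_pin₂ _ _ _ _) (by
        show (1 : ↥K₂) * ι₂' g₀ * b' = b' * (ι₂' g₀')⁻¹ * ι₂' (g₀' * g₀)
        rw [one_mul, map_mul, mul_assoc, inv_mul_cancel_left]
        exact hcbK g₀)
    have r1 : x.j₂ b' u₀ = ⟨(g₀', 1, b' * (ι₂' g₀')⁻¹), x.one₁, mkTry_pin₂ _ _ _ _⟩ :=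
      x.j₂_eq hκinj₂ b' u₀ g₀' (b' * (ι₂' g₀')⁻¹) (mkTry_pin₂ _ _ _ _) (by
        show (1 : ↥K₂) * ι₂' (1 : G₀) * b' = b' * (ι₂' g₀')⁻¹ * ι₂' g₀'
        rw [map_one, mul_one, one_mul, inv_mul_cancel_right])
    have r2 : x.j₁ a' ⟨(g₀', 1, b' * (ι₂' g₀')⁻¹), x.one₁, mkTry_pin₂ _ _ _ _⟩ =
        ⟨(g₀ * g₀', a' * (ι₁' g₀)⁻¹, b' * (ι₂' g₀')⁻¹),
          mkTry_pin₁ _ _ _ _, mkTry_pin₂ _ _ _ _⟩ :=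
      x.j₁_eq hκinj₁ a' _ (g₀ * g₀') (a' * (ι₁' g₀)⁻¹) (mkTry_pin₁ _ _ _ _) (by
        show (1 : ↥K₁) * ι₁' g₀' * a' = a' * (ι₁' g₀)⁻¹ * ι₁' (g₀ * g₀')
        rw [one_mul, map_mul, mul_assoc, inv_mul_cancel_left]
        exact hcaK g₀')
    rw [l1, l2, r1, r2] at hj
    have := congrArg (fun v : x.U => v.val.1) hj
    -- this : g₀' * g₀ = g₀ * g₀'
    exact Commute.symm this
  · -- backward direction
    rintro ⟨hca, hcb, habel⟩
    -- in any try over any injective extensions, the two actions commute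
    have hx : ∀ (H₁ H₂ : Type u) [Group H₁] [Group H₂] (f₁ : ↥K₁ →* H₁) (f₂ : ↥K₂ →* H₂),
        Function.Injective f₁ → Function.Injective f₂ →
        ∀ x : AmalgTry G₀ H₁ H₂ (f₁.comp ι₁') (f₂.comp ι₂'),
        x.j₂ (f₂ b') ∘ x.j₁ (f₁ a') = x.j₁ (f₁ a') ∘ x.j₂ (f₂ b') := by
      intro H₁ H₂ _ _ f₁ f₂ hf₁ hf₂ x
      have hκ₁ : Function.Injective (f₁.comp ι₁') := fun p q hpq =>
        hι₁' (hf₁ hpq)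
      have hκ₂ : Function.Injective (f₂.comp ι₂') := fun p q hpq =>
        hι₂' (hf₂ hpq)
      have hfa : ∀ g : G₀, (f₁.comp ι₁') g * f₁ a' = f₁ a' * (f₁.comp ι₁') g := by
        intro g
        have h1 : ι₁' g * a' = a' * ι₁' g := Subtype.ext (hca g).symm
        simp only [MonoidHom.comp_apply, ← map_mul, h1]
      have hfb : ∀ g : G₀, (f₂.comp ι₂') g * f₂ b' = f₂ b' * (f₂.comp ι₂') g := by
        intro g
        have h1 : ι₂' g * b' = b' * ι₂' g := Subtype.ext (hcb g).symm
        simp only [MonoidHom.comp_apply, ← map_mul, h1]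
      funext u
      obtain ⟨r, ⟨hrI, hA, hAe⟩, -⟩ := x.rep₁ ((u.val.2.1 : H₁) * f₁ a')
      obtain ⟨s, ⟨hsI, hB, hBe⟩, -⟩ := x.rep₂ ((u.val.2.2 : H₂) * f₂ b')
      have key₁ : ∀ g : G₀, u.val.2.1 * (f₁.comp ι₁') g * f₁ a' =
          r * (f₁.comp ι₁') (hA * g) := by
        intro g
        rw [map_mul, ← mul_assoc, ← hAe, mul_assoc, mul_assoc, hfa]
      have key₂ : ∀ g : G₀, u.val.2.2 * (f₂.comp ι₂') g * f₂ b' =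
          s * (f₂.comp ι₂') (hB * g) := by
        intro g
        rw [map_mul, ← mul_assoc, ← hBe, mul_assoc, mul_assoc, hfb]
      have e₁A : x.j₁ (f₁ a') u = ⟨(hA * u.val.1, r, u.val.2.2), hrI, u.prop.2⟩ :=
        x.j₁_eq hκ₁ _ u (hA * u.val.1) r hrI (key₁ u.val.1)
      have e₂B : x.j₂ (f₂ b') u = ⟨(hB * u.val.1, u.val.2.1, s), u.prop.1, hsI⟩ :=
        x.j₂_eq hκ₂ _ u (hB * u.val.1) s hsI (key₂ u.val.1)
      have e₂A : x.j₂ (f₂ b') ⟨(hA * u.val.1, r, u.val.2.2), hrI, u.prop.2⟩ =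
          ⟨(hB * (hA * u.val.1), r, s), hrI, hsI⟩ :=
        x.j₂_eq hκ₂ _ _ (hB * (hA * u.val.1)) s hsI (key₂ (hA * u.val.1))
      have e₁B : x.j₁ (f₁ a') ⟨(hB * u.val.1, u.val.2.1, s), u.prop.1, hsI⟩ =
          ⟨(hA * (hB * u.val.1), r, s), hrI, hsI⟩ :=
        x.j₁_eq hκ₁ _ _ (hA * (hB * u.val.1)) r hrI (key₁ (hB * u.val.1))
      show x.j₂ (f₂ b') (x.j₁ (f₁ a') u) = x.j₁ (f₁ a') (x.j₂ (f₂ b') u)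
      rw [e₁A, e₂A, e₂B, e₁B]
      apply Subtype.ext
      refine Prod.ext ?_ rfl
      rw [← mul_assoc, ← mul_assoc, (habel hB hA).eq]
    -- the commutator is killed by every separating witness, hence trivial
    have hc1 : e₁' a' * e₂' b' = e₂' b' * e₁' a' := by
      by_contra hne
      have hcne : e₁' a' * e₂' b' * (e₂' b' * e₁' a')⁻¹ ≠ 1 := by
        intro hh
        exact hne (by rwa [mul_inv_eq_one] at hh)
      obtain ⟨W⟩ := hsep _ hcne
      letI := W.grp₁
      letI := W.grp₂
      obtain ⟨hF1, hFm, hFj₁, hFj₂⟩ := W.compat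
      have hcommW := hx W.H₁ W.H₂ W.f₁ W.f₂ W.inj₁ W.inj₂ W.x
      have hX : W.F (e₁' a' * e₂' b') = W.F (e₂' b' * e₁' a') := by
        rw [hFm, hFm, hFj₁ a', hFj₂ b']
        exact hcommW
      have hid : W.F (e₁' a' * e₂' b' * (e₂' b' * e₁' a')⁻¹) = id := by
        rw [hFm, hX, ← hFm, mul_inv_cancel]
        exact hF1
      exact W.sep hid
    exact congrArg Subtype.val hc1
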